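/- Let F be a field of characteristic different from 2 and n ≥ 2. Let P(n) denote the subspace of M_{2n}(F) consisting of block matrices [[A, B], [C, Aᵀ]] with A, B, C ∈ M_n(F), Bᵀ = −B, and Cᵀ = C. Grade P(n) with even part the block-diagonal matrices (B = 0, C = 0) and odd part the block-off-diagonal matrices (A = 0), and equip it with the super-symmetrized product: for x = x₀ + x₁ and y = y₀ + y₁ decomposed into even and odd parts, x∘y is bilinear with x₀∘y₀ = (1/2)(x₀y₀ + y₀x₀), x₀∘y₁ = (1/2)(x₀y₁ + y₁x₀), x₁∘y₀ = (1/2)(x₁y₀ + y₀x₁), and x₁∘y₁ = (1/2)(x₁y₁ − y₁x₁). Then every 1/2-derivation φ of P(n) is of the form φ(x) = α·x for some α ∈ F. -/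

import Mathlib

/-- The even (block-diagonal) part of a matrix indexed by `α ⊕ β`. -/
def blockDiagPart {F : Type*} [Field F] {α β : Type*}
    (x : Matrix (α ⊕ β) (α ⊕ β) F) : Matrix (α ⊕ β) (α ⊕ β) F :=
  Matrix.of fun i j => if i.isLeft = j.isLeft then x i j else 0

/-- The super-symmetrized product `∘` on block matrices: writing
`x = x₀ + x₁` with `x₀` the block-diagonal (even) part and `x₁` the
block-off-diagonal (odd) part, `x ∘ y` is bilinear with
`x₀∘y₀ = (1/2)(x₀y₀ + y₀x₀)`, `x₀∘y₁ = (1/2)(x₀y₁ + y₁x₀)`,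
`x₁∘y₀ = (1/2)(x₁y₀ + y₀x₁)` and `x₁∘y₁ = (1/2)(x₁y₁ − y₁x₁)`. -/
def superMul {F : Type*} [Field F] {α β : Type*} [Fintype α] [Fintype β]
    (x y : Matrix (α ⊕ β) (α ⊕ β) F) : Matrix (α ⊕ β) (α ⊕ β) F :=
  (1 / 2 : F) •
    (blockDiagPart x * blockDiagPart y + blockDiagPart y * blockDiagPart x
      + blockDiagPart x * (y - blockDiagPart y) + (y - blockDiagPart y) * blockDiagPart x
      + (x - blockDiagPart x) * blockDiagPart y + blockDiagPart y * (x - blockDiagPart x)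
      + (x - blockDiagPart x) * (y - blockDiagPart y)
      - (y - blockDiagPart y) * (x - blockDiagPart x))

/-- The subspace `P(n)` of `M_{2n}(F)`: block matrices `[[A, B], [C, Aᵀ]]`
with `Bᵀ = −B` and `Cᵀ = C`. -/
def PnSub (F : Type*) [Field F] (n : ℕ) :
    Submodule F (Matrix (Fin n ⊕ Fin n) (Fin n ⊕ Fin n) F) where
  carrier := {x | x.toBlocks₂₂ = x.toBlocks₁₁.transpose
    ∧ x.toBlocks₁₂.transpose = - x.toBlocks₁₂
    ∧ x.toBlocks₂₁.transpose = x.toBlocks₂₁}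
  add_mem' := by
    rintro a b ⟨ha1, ha2, ha3⟩ ⟨hb1, hb2, hb3⟩
    refine ⟨?_, ?_, ?_⟩
    · show a.toBlocks₂₂ + b.toBlocks₂₂ = (a.toBlocks₁₁ + b.toBlocks₁₁).transpose
      rw [Matrix.transpose_add, ha1, hb1]
    · show (a.toBlocks₁₂ + b.toBlocks₁₂).transpose = -(a.toBlocks₁₂ + b.toBlocks₁₂)
      rw [Matrix.transpose_add, ha2, hb2, neg_add]
    · show (a.toBlocks₂₁ + b.toBlocks₂₁).transpose = a.toBlocks₂₁ + b.toBlocks₂₁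
      rw [Matrix.transpose_add, ha3, hb3]
  zero_mem' := by
    refine ⟨?_, ?_, ?_⟩
    · show (0 : Matrix (Fin n) (Fin n) F) = (0 : Matrix (Fin n) (Fin n) F).transpose
      simp
    · show (0 : Matrix (Fin n) (Fin n) F).transpose = -(0 : Matrix (Fin n) (Fin n) F)
      simp
    · show (0 : Matrix (Fin n) (Fin n) F).transpose = 0
      simp
  smul_mem' := by
    rintro c x ⟨h1, h2, h3⟩
    refine ⟨?_, ?_, ?_⟩
    · show c • x.toBlocks₂₂ = (c • x.toBlocks₁₁).transpose
      rw [Matrix.transpose_smul, h1]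
    · show (c • x.toBlocks₁₂).transpose = -(c • x.toBlocks₁₂)
      rw [Matrix.transpose_smul, h2, smul_neg]
    · show (c • x.toBlocks₂₁).transpose = c • x.toBlocks₂₁
      rw [Matrix.transpose_smul, h3]

section Aux
open Matrix
variable {F : Type*} [Field F] {n : ℕ}

lemma bdp_fromBlocks (A B C D : Matrix (Fin n) (Fin n) F) :
    blockDiagPart (fromBlocks A B C D) = fromBlocks A 0 0 D := by
  ext (i|i) (j|j) <;> simp [blockDiagPart, fromBlocks]

lemma fromBlocks_sub' (A B C D A' B' C' D' : Matrix (Fin n) (Fin n) F) :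
    fromBlocks A B C D - fromBlocks A' B' C' D'
      = fromBlocks (A - A') (B - B') (C - C') (D - D') := by
  simp [sub_eq_add_neg, Matrix.fromBlocks_neg, Matrix.fromBlocks_add]

lemma bdp_one : blockDiagPart (1 : Matrix (Fin n ⊕ Fin n) (Fin n ⊕ Fin n) F) = 1 := by
  rw [← Matrix.fromBlocks_one, bdp_fromBlocks]

lemma superMul_one_left (hchar : (2:F) ≠ 0) (x : Matrix (Fin n ⊕ Fin n) (Fin n ⊕ Fin n) F) :
    superMul 1 x = x := by
  unfold superMul
  rw [bdp_one]
  simp only [one_mul, mul_one, sub_self, zero_mul, mul_zero]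
  match_scalars <;> field_simp <;> norm_num

lemma superMul_one_right (hchar : (2:F) ≠ 0) (x : Matrix (Fin n ⊕ Fin n) (Fin n ⊕ Fin n) F) :
    superMul x 1 = x := by
  unfold superMul
  rw [bdp_one]
  simp only [one_mul, mul_one, sub_self, zero_mul, mul_zero]
  match_scalars <;> field_simp <;> norm_num

lemma superMul_fromBlocks (A B C D A' B' C' D' : Matrix (Fin n) (Fin n) F) :
    superMul (fromBlocks A B C D) (fromBlocks A' B' C' D') =
      (1 / 2 : F) • fromBlocks
        (A*A' + A'*A + B*C' - B'*C)
        (A*B' + B'*D + B*D' + A'*B)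
        (D*C' + C'*A + C*A' + D'*C)
        (D*D' + D'*D + C*B' - C'*B) := by
  unfold superMul
  rw [bdp_fromBlocks, bdp_fromBlocks, fromBlocks_sub', fromBlocks_sub']
  simp only [sub_zero, sub_self, Matrix.fromBlocks_multiply, Matrix.fromBlocks_add,
    fromBlocks_sub', Matrix.fromBlocks_smul, mul_zero, zero_mul, add_zero, zero_add]

lemma mem_PnSub_fromBlocks {A B C D : Matrix (Fin n) (Fin n) F}
    (h1 : D = A.transpose) (h2 : B.transpose = -B) (h3 : C.transpose = C) :
    fromBlocks A B C D ∈ PnSub F n := by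
  refine ⟨?_, ?_, ?_⟩ <;>
    simp [Matrix.toBlocks_fromBlocks₁₁, Matrix.toBlocks_fromBlocks₁₂,
      Matrix.toBlocks_fromBlocks₂₁, Matrix.toBlocks_fromBlocks₂₂, h1, h2, h3]

lemma stdBasisMatrix_transpose' (i j : Fin n) :
    (Matrix.single i j (1:F)).transpose = Matrix.single j i 1 := by
  ext a b
  simp [Matrix.single, Matrix.transpose_apply, and_comm]

lemma bdp_smul (c : F) (u : Matrix (Fin n ⊕ Fin n) (Fin n ⊕ Fin n) F) :
    blockDiagPart (c • u) = c • blockDiagPart u := by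
  ext i j
  by_cases h : i.isLeft = j.isLeft <;> simp [blockDiagPart, h]

lemma superMul_smul_left (c : F) (u v : Matrix (Fin n ⊕ Fin n) (Fin n ⊕ Fin n) F) :
    superMul (c • u) v = c • superMul u v := by
  unfold superMul
  rw [bdp_smul, ← smul_sub]
  simp only [smul_mul_assoc, mul_smul_comm]
  match_scalars <;> ring

lemma half_cancel (hchar : (2:F) ≠ 0) {V : Type*} [AddCommGroup V] [Module F V]
    {a s : V} (h : a = (1/2 : F) • (s + a)) : a = s := by
  have h2 := congrArg (fun v => (2:F) • v) h
  simp only [smul_smul] at h2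
  rw [show (2:F) * (1/2) = 1 by field_simp, one_smul, two_smul] at h2
  exact add_right_cancel h2

end Aux

open Matrix

/-- **1/2-derivations of the Jordan superalgebra `P(n)`.**
Let `F` be a field of characteristic not `2` and `n ≥ 2`.  Every
`1/2`-derivation `φ` of `P(n)` (with the super-symmetrized product `∘`)
is of the form `φ x = α • x` for some `α ∈ F`.  (The `1/2`-derivation
property is stated via representatives: whenever `z ∈ P(n)` equals
`x ∘ y` as a matrix, `φ z = (1/2) • (φ x ∘ y + x ∘ φ y)`.) -/
theorem half_derivation_of_Pn
    {F : Type*} [Field F] (hchar : (2 : F) ≠ 0) (n : ℕ) (hn : 2 ≤ n)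
    (φ : PnSub F n →ₗ[F] PnSub F n)
    (hφ : ∀ x y z : PnSub F n,
      (z : Matrix (Fin n ⊕ Fin n) (Fin n ⊕ Fin n) F)
          = superMul (x : Matrix (Fin n ⊕ Fin n) (Fin n ⊕ Fin n) F)
              (y : Matrix (Fin n ⊕ Fin n) (Fin n ⊕ Fin n) F) →
      (φ z : Matrix (Fin n ⊕ Fin n) (Fin n ⊕ Fin n) F)
        = (1 / 2 : F) • (superMul (φ x : Matrix (Fin n ⊕ Fin n) (Fin n ⊕ Fin n) F)
              (y : Matrix (Fin n ⊕ Fin n) (Fin n ⊕ Fin n) F)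
            + superMul (x : Matrix (Fin n ⊕ Fin n) (Fin n ⊕ Fin n) F)
              (φ y : Matrix (Fin n ⊕ Fin n) (Fin n ⊕ Fin n) F))) :
    ∃ α : F, ∀ x : PnSub F n, φ x = α • x := by
  classical
  have hone : (1 : Matrix (Fin n ⊕ Fin n) (Fin n ⊕ Fin n) F) ∈ PnSub F n := by
    rw [← Matrix.fromBlocks_one]
    exact mem_PnSub_fromBlocks (by simp) (by simp) (by simp)
  let e : PnSub F n := ⟨1, hone⟩
  have hcoe : (e : Matrix (Fin n ⊕ Fin n) (Fin n ⊕ Fin n) F) = 1 := rfl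
  let d : Matrix (Fin n ⊕ Fin n) (Fin n ⊕ Fin n) F := (φ e : _)
  have F1 : ∀ x : PnSub F n,
      (φ x : Matrix (Fin n ⊕ Fin n) (Fin n ⊕ Fin n) F) = superMul d (x : _) := by
    intro x
    have h := hφ e x x (by rw [hcoe, superMul_one_left hchar])
    rw [hcoe, superMul_one_left hchar] at h
    exact half_cancel hchar h
  have F2 : ∀ x : PnSub F n,
      (φ x : Matrix (Fin n ⊕ Fin n) (Fin n ⊕ Fin n) F) = superMul (x : _) d := by
    intro x
    have h := hφ x e x (by rw [hcoe, superMul_one_right hchar])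
    rw [hcoe, superMul_one_right hchar, add_comm] at h
    exact half_cancel hchar h
  -- block decomposition of d
  obtain ⟨hd1, hd2, hd3⟩ := (φ e).2
  have hd : d = fromBlocks d.toBlocks₁₁ d.toBlocks₁₂ d.toBlocks₂₁ (d.toBlocks₁₁)ᵀ := by
    conv_lhs => rw [← Matrix.fromBlocks_toBlocks d]
    rw [hd1]
  -- the odd test element t = [[0,0],[1,0]]
  have htmem : fromBlocks (0 : Matrix (Fin n) (Fin n) F) 0 1 0 ∈ PnSub F n :=
    mem_PnSub_fromBlocks (by simp) (by simp) (by simp)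
  let t : PnSub F n := ⟨fromBlocks 0 0 1 0, htmem⟩
  have htcoe : (t : Matrix (Fin n ⊕ Fin n) (Fin n ⊕ Fin n) F) = fromBlocks 0 0 1 0 := rfl
  -- d commutes (in the super sense) with everything
  have Fcomm : ∀ x : PnSub F n, superMul d (x : _) = superMul (x : _) d :=
    fun x => (F1 x).symm.trans (F2 x)
  -- step 1 : the 1-2 block of d vanishes
  have hB : d.toBlocks₁₂ = 0 := by
    have hc := Fcomm t
    rw [htcoe] at hc
    conv_lhs at hc => rw [hd]
    conv_rhs at hc => rw [hd]
    rw [superMul_fromBlocks, superMul_fromBlocks] at hc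
    simp only [mul_zero, zero_mul, mul_one, one_mul, add_zero, zero_add, sub_zero,
      zero_sub] at hc
    have hc2 := smul_right_injective (Matrix (Fin n ⊕ Fin n) (Fin n ⊕ Fin n) F)
      (one_div_ne_zero hchar) hc
    have h11 := (Matrix.fromBlocks_inj.mp hc2).1
    have h2s : (2:F) • d.toBlocks₁₂ = 0 := by
      rw [two_smul]; nth_rewrite 1 [h11]; exact neg_add_cancel _
    rcases smul_eq_zero.mp h2s with h | h
    · exact absurd h hchar
    · exact h
  -- step 2 : the 2-1 block of d vanishes
  have hC : d.toBlocks₂₁ = 0 := by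
    ext j l
    obtain ⟨i, hi⟩ : ∃ i : Fin n, i ≠ j := by
      rcases eq_or_ne j ⟨0, by omega⟩ with rfl | hj
      · exact ⟨⟨1, by omega⟩, by simp [Fin.ext_iff]⟩
      · exact ⟨⟨0, by omega⟩, fun h => hj h.symm⟩
    have hsmem : fromBlocks (0 : Matrix (Fin n) (Fin n) F)
        (Matrix.single i j 1 - Matrix.single j i 1) 0 0 ∈ PnSub F n := by
      refine mem_PnSub_fromBlocks (by simp) ?_ (by simp)
      rw [Matrix.transpose_sub, stdBasisMatrix_transpose', stdBasisMatrix_transpose']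
      abel
    have hc := Fcomm ⟨_, hsmem⟩
    have hscoe : ((⟨_, hsmem⟩ : PnSub F n) : Matrix (Fin n ⊕ Fin n) (Fin n ⊕ Fin n) F)
        = fromBlocks 0 (Matrix.single i j 1 - Matrix.single j i 1) 0 0 := rfl
    rw [hscoe] at hc
    conv_lhs at hc => rw [hd]
    conv_rhs at hc => rw [hd]
    rw [hB] at hc
    rw [superMul_fromBlocks, superMul_fromBlocks] at hc
    simp only [mul_zero, zero_mul, mul_one, one_mul, add_zero, zero_add, sub_zero,
      zero_sub] at hc
    have hc2 := smul_right_injective (Matrix (Fin n ⊕ Fin n) (Fin n ⊕ Fin n) F)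
      (one_div_ne_zero hchar) hc
    have h11 := (Matrix.fromBlocks_inj.mp hc2).1
    have h2s : (2:F) • ((Matrix.single i j (1:F) - Matrix.single j i 1)
        * d.toBlocks₂₁) = 0 := by
      rw [two_smul]; nth_rewrite 1 [← h11]; exact neg_add_cancel _
    have hz : (Matrix.single i j (1:F) - Matrix.single j i 1)
        * d.toBlocks₂₁ = 0 := (smul_eq_zero.mp h2s).resolve_left hchar
    have he2 := congrFun (congrFun hz i) l
    rw [Matrix.sub_mul, Matrix.sub_apply, Matrix.single_mul_apply_same,
      Matrix.single_mul_apply_of_ne _ _ _ _ _ hi, one_mul, sub_zero] at he2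
    simpa using he2
  rw [hB, hC] at hd
  -- main relation
  have key : ∀ i j : Fin n, i ≠ j →
      d.toBlocks₁₁ i i = d.toBlocks₁₁ j j ∧ d.toBlocks₁₁ i j = 0 := by
    intro i j hij
    set B : Matrix (Fin n) (Fin n) F :=
      Matrix.single i j 1 - Matrix.single j i 1 with hBdef
    have hBt : Bᵀ = -B := by
      rw [hBdef, Matrix.transpose_sub, stdBasisMatrix_transpose', stdBasisMatrix_transpose']
      abel
    have hxmem : fromBlocks (0 : Matrix (Fin n) (Fin n) F) B 0 0 ∈ PnSub F n :=
      mem_PnSub_fromBlocks (by simp) hBt (by simp)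
    have hzmem : fromBlocks ((1/2:F) • B) 0 0 ((1/2:F) • (-B)) ∈ PnSub F n := by
      refine mem_PnSub_fromBlocks ?_ (by simp) (by simp)
      rw [Matrix.transpose_smul, hBt]
    have hz : (fromBlocks ((1/2:F) • B) 0 0 ((1/2:F) • (-B)))
        = superMul (fromBlocks (0 : Matrix (Fin n) (Fin n) F) B 0 0) (fromBlocks 0 0 1 0) := by
      rw [superMul_fromBlocks]
      simp [Matrix.fromBlocks_smul]
    have hder := hφ ⟨_, hxmem⟩ t ⟨_, hzmem⟩ (by rw [htcoe]; exact hz)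
    rw [F1 ⟨_, hxmem⟩, F1 t, F1 ⟨_, hzmem⟩] at hder
    rw [show ((⟨_, hxmem⟩ : PnSub F n) : Matrix (Fin n ⊕ Fin n) (Fin n ⊕ Fin n) F)
        = fromBlocks 0 B 0 0 from rfl,
      show ((⟨_, hzmem⟩ : PnSub F n) : Matrix (Fin n ⊕ Fin n) (Fin n ⊕ Fin n) F)
        = fromBlocks ((1/2:F) • B) 0 0 ((1/2:F) • (-B)) from rfl, htcoe] at hder
    rw [hd] at hder
    rw [superMul_fromBlocks, superMul_fromBlocks, superMul_fromBlocks] at hder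
    simp only [Matrix.fromBlocks_smul, smul_zero, mul_zero, zero_mul, mul_one, one_mul,
      add_zero, zero_add, sub_zero, zero_sub, smul_neg, neg_zero] at hder
    rw [superMul_fromBlocks, superMul_fromBlocks] at hder
    simp only [Matrix.fromBlocks_smul, smul_zero, mul_zero, zero_mul, mul_one, one_mul,
      add_zero, zero_add, sub_zero, zero_sub, smul_neg, neg_zero,
      Matrix.fromBlocks_add] at hder
    have h11 := (Matrix.fromBlocks_inj.mp hder).1
    rw [hBdef] at h11
    simp only [Matrix.mul_sub, Matrix.sub_mul, mul_smul_comm, smul_mul_assoc, smul_sub,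
      smul_add, smul_smul, Matrix.mul_add, Matrix.add_mul] at h11
    have hii := congrFun (congrFun h11 i) i
    have hjj := congrFun (congrFun h11 j) j
    have hij2 := congrFun (congrFun h11 i) j
    simp [Matrix.smul_apply, Matrix.sub_apply, Matrix.transpose_apply,
      hij, Ne.symm hij] at hii hjj hij2
    field_simp [hchar] at hii hjj hij2
    constructor
    · have h4 : (4:F) * (d.toBlocks₁₁ i i - d.toBlocks₁₁ j j) = 0 := by
        linear_combination (4:F) * hij2
      have h4ne : (4:F) ≠ 0 := by
        have : (4:F) = 2^2 := by norm_num
        rw [this]; exact pow_ne_zero _ hchar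
      have := (mul_eq_zero.mp h4).resolve_left h4ne
      exact sub_eq_zero.mp this
    · have h256 : (256:F) * d.toBlocks₁₁ i j = 0 := by
        linear_combination (-96:F) * hii + (32:F) * hjj
      have hne : (256:F) ≠ 0 := by
        have : (256:F) = 2^8 := by norm_num
        rw [this]; exact pow_ne_zero _ hchar
      exact (mul_eq_zero.mp h256).resolve_left hne
  -- conclude : d = α • 1
  have z0 : Fin n := ⟨0, by omega⟩
  refine ⟨d.toBlocks₁₁ ⟨0, by omega⟩ ⟨0, by omega⟩, ?_⟩
  set α := d.toBlocks₁₁ ⟨0, by omega⟩ ⟨0, by omega⟩ with hα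
  have hDiag : ∀ p : Fin n, d.toBlocks₁₁ p p = α := by
    intro p
    rcases eq_or_ne p ⟨0, by omega⟩ with rfl | h
    · rfl
    · exact (key p ⟨0, by omega⟩ h).1
  have hD : d.toBlocks₁₁ = α • (1 : Matrix (Fin n) (Fin n) F) := by
    ext p q
    rcases eq_or_ne p q with rfl | h
    · simp [Matrix.one_apply, hDiag p]
    · simp [Matrix.one_apply_ne h, (key p q h).2]
  have hdfull : d = α • (1 : Matrix (Fin n ⊕ Fin n) (Fin n ⊕ Fin n) F) := by
    rw [hd, hD, Matrix.transpose_smul, Matrix.transpose_one]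
    rw [show (0 : Matrix (Fin n) (Fin n) F) = α • 0 from (smul_zero α).symm,
      ← Matrix.fromBlocks_smul, Matrix.fromBlocks_one]
  intro x
  apply Subtype.ext
  rw [show ((α • x : PnSub F n) : Matrix (Fin n ⊕ Fin n) (Fin n ⊕ Fin n) F)
    = α • (x : Matrix (Fin n ⊕ Fin n) (Fin n ⊕ Fin n) F) from rfl]
  rw [F1 x, hdfull, superMul_smul_left, superMul_one_left hchar]
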